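/- arXiv:1112.1993 — 2 statements merged into one kernel-verified Lean document; each statement's English description precedes it below -/
import Mathlib

section
/- Let X be a nonempty finite subset of ℝ^n and σ > 0. For every y ∈ ℝ^n with the kernel density estimator f and mean shift map m as defined, one has m(y) − y = σ² · ∇f(y) / f(y); equivalently, f(y) · (m(y) − y) = σ² · ∇f(y). In particular the mean shift vector m(y) − y is proportional to the normalized gradient ∇f(y)/f(y). -/
open scoped BigOperators

/-- Gaussian kernel: density of the multivariate normal distribution on `ℝ^n`
with mean `x` and covariance matrix `σ² I`. -/
noncomputable def gaussKernel (n : ℕ) (σ : ℝ) (x y : EuclideanSpace ℝ (Fin n)) : ℝ :=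
  (2 * Real.pi * σ ^ 2) ^ (-(n : ℝ) / 2) * Real.exp (-‖y - x‖ ^ 2 / (2 * σ ^ 2))

/-- Kernel density estimator `f(y) = |X|⁻¹ Σ_{x ∈ X} ψ_{x,σ}(y)`. -/
noncomputable def kde (n : ℕ) (σ : ℝ) (X : Finset (EuclideanSpace ℝ (Fin n)))
    (y : EuclideanSpace ℝ (Fin n)) : ℝ :=
  (X.card : ℝ)⁻¹ * ∑ x ∈ X, gaussKernel n σ x y

/-- Mean shift map `m(y) = (Σ_{x∈X} ψ_{x,σ}(y) x) / (Σ_{x∈X} ψ_{x,σ}(y))`. -/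
noncomputable def meanShift (n : ℕ) (σ : ℝ) (X : Finset (EuclideanSpace ℝ (Fin n)))
    (y : EuclideanSpace ℝ (Fin n)) : EuclideanSpace ℝ (Fin n) :=
  (∑ x ∈ X, gaussKernel n σ x y)⁻¹ • ∑ x ∈ X, gaussKernel n σ x y • x

lemma gaussKernel_pos (n : ℕ) (σ : ℝ) (hσ : 0 < σ) (x y : EuclideanSpace ℝ (Fin n)) :
    0 < gaussKernel n σ x y := by
  have h : (0:ℝ) < 2 * Real.pi * σ ^ 2 := by positivity
  unfold gaussKernel
  positivity

lemma hasFDerivAt_gaussKernel (n : ℕ) (σ : ℝ) (hσ : 0 < σ) (x y : EuclideanSpace ℝ (Fin n)) :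
    HasFDerivAt (fun z => gaussKernel n σ x z)
      ((gaussKernel n σ x y * (-(σ ^ 2)⁻¹)) • innerSL ℝ (y - x)) y := by
  have h0 : HasFDerivAt (fun z : EuclideanSpace ℝ (Fin n) => z - x)
      (ContinuousLinearMap.id ℝ _) y := (hasFDerivAt_id y).sub_const x
  have h1 := h0.norm_sq
  have h2 : HasFDerivAt (fun z => -‖z - x‖ ^ 2 / (2 * σ ^ 2))
      ((-(2 * σ ^ 2)⁻¹) • (2 • (innerSL ℝ (y - x)))) y := by
    have := h1.const_mul (-(2 * σ ^ 2)⁻¹)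
    have e : (fun z => -‖z - x‖ ^ 2 / (2 * σ ^ 2)) = fun z => -(2 * σ ^ 2)⁻¹ * ‖z - x‖ ^ 2 := by
      funext z; ring
    rw [e]
    exact this
  have h3 := h2.exp
  have h4 := h3.const_mul ((2 * Real.pi * σ ^ 2) ^ (-(n : ℝ) / 2))
  have e : ((gaussKernel n σ x y * (-(σ ^ 2)⁻¹)) • innerSL ℝ (y - x) :
      EuclideanSpace ℝ (Fin n) →L[ℝ] ℝ) = (2 * Real.pi * σ ^ 2) ^ (-(n : ℝ) / 2) •
      Real.exp (-‖y - x‖ ^ 2 / (2 * σ ^ 2)) • -(2 * σ ^ 2)⁻¹ • 2 • innerSL ℝ (y - x) := by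
    ext v
    have hσ2 : (σ:ℝ) ^ 2 ≠ 0 := by positivity
    simp [gaussKernel, smul_smul]
    field_simp
  rw [e]
  exact h4

lemma gradient_kde (n : ℕ) (X : Finset (EuclideanSpace ℝ (Fin n)))
    (σ : ℝ) (hσ : 0 < σ) (y : EuclideanSpace ℝ (Fin n)) :
    gradient (kde n σ X) y =
      (X.card : ℝ)⁻¹ • ∑ x ∈ X, (gaussKernel n σ x y * (-(σ ^ 2)⁻¹)) • (y - x) := by
  have hF : HasFDerivAt (kde n σ X)
      ((X.card : ℝ)⁻¹ • ∑ x ∈ X,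
        (gaussKernel n σ x y * (-(σ ^ 2)⁻¹)) • innerSL ℝ (y - x)) y := by
    have hs := HasFDerivAt.fun_sum (fun x (_ : x ∈ X) => hasFDerivAt_gaussKernel n σ hσ x y)
    exact hs.const_mul _
  have hg := (hasFDerivAt_iff_hasGradientAt.mp hF).gradient
  rw [hg, map_smul, map_sum]
  congr 1
  refine Finset.sum_congr rfl fun x _ => ?_
  rw [map_smul]
  congr 1
  refine (InnerProductSpace.toDual ℝ _).symm_apply_eq.mpr ?_
  ext w
  simp [InnerProductSpace.toDual_apply_apply]

/-- The mean shift vector `m(y) − y` equals `σ² ∇f(y) / f(y)`; equivalently,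
`f(y) • (m(y) − y) = σ² • ∇f(y)`. -/
theorem meanShift_eq_normalized_gradient (n : ℕ) (X : Finset (EuclideanSpace ℝ (Fin n)))
    (hX : X.Nonempty) (σ : ℝ) (hσ : 0 < σ) (y : EuclideanSpace ℝ (Fin n)) :
    meanShift n σ X y - y = (σ ^ 2 / kde n σ X y) • gradient (kde n σ X) y ∧
    kde n σ X y • (meanShift n σ X y - y) = σ ^ 2 • gradient (kde n σ X) y := by
  have hS : (0:ℝ) < ∑ x ∈ X, gaussKernel n σ x y :=
    Finset.sum_pos (fun x _ => gaussKernel_pos n σ hσ x y) hX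
  have hcard : (0:ℝ) < (X.card : ℝ) := by
    exact_mod_cast Finset.card_pos.mpr hX
  have hk : 0 < kde n σ X y := by
    unfold kde; positivity
  have hσ2 : (σ:ℝ) ^ 2 ≠ 0 := by positivity
  have key : kde n σ X y • (meanShift n σ X y - y) = σ ^ 2 • gradient (kde n σ X) y := by
    rw [gradient_kde n X σ hσ y]
    show ((X.card : ℝ)⁻¹ * ∑ x ∈ X, gaussKernel n σ x y) •
        ((∑ x ∈ X, gaussKernel n σ x y)⁻¹ • (∑ x ∈ X, gaussKernel n σ x y • x) - y)
      = σ ^ 2 • ((X.card : ℝ)⁻¹ • ∑ x ∈ X, (gaussKernel n σ x y * (-(σ ^ 2)⁻¹)) • (y - x))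
    rw [mul_smul, smul_sub, smul_smul, mul_inv_cancel₀ hS.ne', one_smul,
      Finset.sum_smul, ← Finset.sum_sub_distrib, smul_comm (σ ^ 2) ((X.card : ℝ)⁻¹)]
    simp only [Finset.smul_sum]
    refine Finset.sum_congr rfl fun x _ => ?_
    refine congrArg _ ?_
    rw [smul_smul]
    have h : σ ^ 2 * (gaussKernel n σ x y * -(σ ^ 2)⁻¹) = -gaussKernel n σ x y := by
      field_simp
    rw [h, neg_smul, smul_sub, neg_sub]
  refine ⟨?_, key⟩
  have := congrArg (fun v => (kde n σ X y)⁻¹ • v) key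
  simp only [smul_smul, inv_mul_cancel₀ (ne_of_gt hk), one_smul] at this
  rw [this, div_eq_inv_mul, mul_smul]
end

section
/- Let X be a nonempty finite subset of ℝ^n and σ > 0, with kernel density estimator f and mean shift map m as defined. Then one mean shift step never decreases the estimated density: f(m(y)) ≥ f(y) for every y ∈ ℝ^n. -/
open scoped BigOperators

/-- One mean shift step never decreases the estimated density: `f(m(y)) ≥ f(y)`. -/
theorem kde_meanShift_ge (n : ℕ) (X : Finset (EuclideanSpace ℝ (Fin n)))
    (hX : X.Nonempty) (σ : ℝ) (hσ : 0 < σ) (y : EuclideanSpace ℝ (Fin n)) :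
    kde n σ X y ≤ kde n σ X (meanShift n σ X y) := by
  classical
  set w : EuclideanSpace ℝ (Fin n) → ℝ := fun x => gaussKernel n σ x y with hw
  have hc : (0:ℝ) < (2 * Real.pi * σ ^ 2) ^ (-(n : ℝ) / 2) :=
    Real.rpow_pos_of_pos (by positivity) _
  have hwpos : ∀ x, 0 < w x := by
    intro x
    simp only [hw, gaussKernel]
    positivity
  set S : ℝ := ∑ x ∈ X, w x with hS
  have hSpos : 0 < S := Finset.sum_pos (fun x _ => hwpos x) hX
  set m : EuclideanSpace ℝ (Fin n) := meanShift n σ X y with hm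
  have hsum : ∑ x ∈ X, w x • x = S • m := by
    rw [hm, meanShift, smul_smul, mul_inv_cancel₀ hSpos.ne', one_smul]
  -- key identity
  have hident : ∑ x ∈ X, w x * (‖y - x‖ ^ 2 - ‖m - x‖ ^ 2) = S * ‖y - m‖ ^ 2 := by
    have step : ∀ x ∈ X, w x * (‖y - x‖ ^ 2 - ‖m - x‖ ^ 2)
        = w x * (‖y‖ ^ 2 - ‖m‖ ^ 2) - 2 * inner ℝ y (w x • x) + 2 * inner ℝ m (w x • x) := by
      intro x _
      rw [norm_sub_sq_real y x, norm_sub_sq_real m x,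
        real_inner_smul_right, real_inner_smul_right]
      ring
    rw [Finset.sum_congr rfl step]
    rw [Finset.sum_add_distrib, Finset.sum_sub_distrib, ← Finset.sum_mul,
      ← Finset.mul_sum, ← Finset.mul_sum, ← inner_sum, ← inner_sum, hsum,
      real_inner_smul_right, real_inner_smul_right, real_inner_self_eq_norm_sq,
      norm_sub_sq_real y m]
    ring
  -- pointwise bound
  have hpt : ∀ x ∈ X, w x * ((‖y - x‖ ^ 2 - ‖m - x‖ ^ 2) / (2 * σ ^ 2))
      ≤ gaussKernel n σ x m - gaussKernel n σ x y := by
    intro x _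
    have hA : gaussKernel n σ x m = (2 * Real.pi * σ ^ 2) ^ (-(n : ℝ) / 2) *
        Real.exp (-‖m - x‖ ^ 2 / (2 * σ ^ 2)) := rfl
    have hB : w x = (2 * Real.pi * σ ^ 2) ^ (-(n : ℝ) / 2) *
        Real.exp (-‖y - x‖ ^ 2 / (2 * σ ^ 2)) := rfl
    set A : ℝ := -‖m - x‖ ^ 2 / (2 * σ ^ 2)
    set B : ℝ := -‖y - x‖ ^ 2 / (2 * σ ^ 2)
    have hexp : Real.exp B * (A - B) ≤ Real.exp A - Real.exp B := by
      have h1 : A - B + 1 ≤ Real.exp (A - B) := Real.add_one_le_exp _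
      have h2 : (A - B + 1) * Real.exp B ≤ Real.exp (A - B) * Real.exp B :=
        mul_le_mul_of_nonneg_right h1 (Real.exp_nonneg _)
      rw [← Real.exp_add, sub_add_cancel] at h2
      nlinarith [h2]
    have hAB : A - B = (‖y - x‖ ^ 2 - ‖m - x‖ ^ 2) / (2 * σ ^ 2) := by
      simp only [A, B]
      ring
    calc w x * ((‖y - x‖ ^ 2 - ‖m - x‖ ^ 2) / (2 * σ ^ 2))
        = (2 * Real.pi * σ ^ 2) ^ (-(n : ℝ) / 2) * (Real.exp B * (A - B)) := by
          rw [hB, hAB]; ring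
      _ ≤ (2 * Real.pi * σ ^ 2) ^ (-(n : ℝ) / 2) * (Real.exp A - Real.exp B) :=
          mul_le_mul_of_nonneg_left hexp hc.le
      _ = gaussKernel n σ x m - gaussKernel n σ x y := by
          rw [hA, show gaussKernel n σ x y
            = (2 * Real.pi * σ ^ 2) ^ (-(n : ℝ) / 2) * Real.exp B from rfl]
          ring
  have hsum_le : ∑ x ∈ X, w x * ((‖y - x‖ ^ 2 - ‖m - x‖ ^ 2) / (2 * σ ^ 2))
      ≤ ∑ x ∈ X, (gaussKernel n σ x m - gaussKernel n σ x y) :=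
    Finset.sum_le_sum hpt
  have hleft : ∑ x ∈ X, w x * ((‖y - x‖ ^ 2 - ‖m - x‖ ^ 2) / (2 * σ ^ 2))
      = (2 * σ ^ 2)⁻¹ * (S * ‖y - m‖ ^ 2) := by
    rw [← hident, Finset.mul_sum]
    exact Finset.sum_congr rfl fun x _ => by ring
  have hnn : (0:ℝ) ≤ (2 * σ ^ 2)⁻¹ * (S * ‖y - m‖ ^ 2) := by positivity
  have hfin : ∑ x ∈ X, gaussKernel n σ x y ≤ ∑ x ∈ X, gaussKernel n σ x m := by
    have := hsum_le
    rw [hleft, Finset.sum_sub_distrib] at this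
    have : (0:ℝ) ≤ ∑ x ∈ X, gaussKernel n σ x m - ∑ x ∈ X, gaussKernel n σ x y :=
      le_trans hnn this
    linarith
  unfold kde
  exact mul_le_mul_of_nonneg_left hfin (by positivity)
end
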